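/- (Post hoc switch from FDR to FWER.) Let α ∈ (0,1] and suppose the measurable random collection ℛ : Ω → (sets of subsets of [m]) controls FDR simultaneously at level α, i.e., ∫ max_{R ∈ ℛ(ω) ∪ {∅}} FDP_{N_P}(R) dP(ω) ≤ α for every P ∈ M. Define 𝐑(ω) = {i ∈ [m] : {i} ∈ ℛ(ω)}. Then 𝐑 controls FWER at level α: P({ω : 𝐑(ω) ∩ N_P ≠ ∅}) ≤ α for every P ∈ M. -/

import Mathlib

open MeasureTheory

/-- Post hoc switch from FDR to FWER: if ℛ controls FDR simultaneously at
level α, then the union of the singleton sets in ℛ, 𝐑(ω) = {i : {i} ∈ ℛ(ω)}, controls FWER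
at level α. -/
theorem statement_15 (m : ℕ) (hm : 1 ≤ m) {Ω : Type*} [MeasurableSpace Ω]
    (M : Set (Measure Ω)) (hM : ∀ P ∈ M, IsProbabilityMeasure P)
    (H : Fin m → Set (Measure Ω))
    (N : Measure Ω → Finset (Fin m)) (hN : ∀ P i, i ∈ N P ↔ P ∈ H i)
    (α : ℝ) (hα : α ∈ Set.Ioc (0 : ℝ) 1)
    (ℛ : Ω → Finset (Finset (Fin m)))
    (hmeas : ∀ R₀, MeasurableSet {ω | R₀ ∈ ℛ ω})
    (hctrl : ∀ P ∈ M,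
      ∫⁻ ω, ENNReal.ofReal ((insert ∅ (ℛ ω)).sup' (Finset.insert_nonempty _ _)
        (fun R => ((R ∩ N P).card : ℝ) / ((max R.card 1 : ℕ) : ℝ))) ∂P
        ≤ ENNReal.ofReal α) :
    ∀ P ∈ M,
      P {ω | ((Finset.univ.filter fun i : Fin m => ({i} : Finset (Fin m)) ∈ ℛ ω)
          ∩ N P).Nonempty} ≤ ENNReal.ofReal α := by
  intro P hP
  set E : Set Ω := {ω | ((Finset.univ.filter fun i : Fin m => ({i} : Finset (Fin m)) ∈ ℛ ω)
      ∩ N P).Nonempty} with hE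
  have hEeq : E = ⋃ i ∈ N P, {ω | ({i} : Finset (Fin m)) ∈ ℛ ω} := by
    ext ω
    simp only [hE, Set.mem_setOf_eq, Finset.Nonempty, Finset.mem_inter, Finset.mem_filter,
      Finset.mem_univ, true_and, Set.mem_iUnion, Set.mem_setOf_eq]
    tauto
  have hEmeas : MeasurableSet E := by
    rw [hEeq]
    exact MeasurableSet.biUnion (Finset.countable_toSet _) fun i _ => hmeas _
  have key : ∀ ω, E.indicator (fun _ => (1 : ENNReal)) ω ≤
      ENNReal.ofReal ((insert ∅ (ℛ ω)).sup' (Finset.insert_nonempty _ _)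
        (fun R => ((R ∩ N P).card : ℝ) / ((max R.card 1 : ℕ) : ℝ))) := by
    intro ω
    by_cases hω : ω ∈ E
    · rw [Set.indicator_of_mem hω]
      obtain ⟨i, hi⟩ := hω
      simp only [Finset.mem_inter, Finset.mem_filter, Finset.mem_univ, true_and] at hi
      have hmem : ({i} : Finset (Fin m)) ∈ insert ∅ (ℛ ω) := Finset.mem_insert_of_mem hi.1
      have hval : (1 : ℝ) ≤ (insert ∅ (ℛ ω)).sup' (Finset.insert_nonempty _ _)
          (fun R => ((R ∩ N P).card : ℝ) / ((max R.card 1 : ℕ) : ℝ)) := by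
        have := Finset.le_sup' (f := fun R : Finset (Fin m) =>
          ((R ∩ N P).card : ℝ) / ((max R.card 1 : ℕ) : ℝ)) hmem
        have hcard : (({i} : Finset (Fin m)) ∩ N P).card = 1 := by
          rw [Finset.singleton_inter_of_mem hi.2]
          simp
        refine le_trans ?_ this
        simp [hcard]
      exact ENNReal.one_le_ofReal.mpr hval
    · rw [Set.indicator_of_notMem hω]
      exact zero_le
  calc P E = ∫⁻ ω, E.indicator (fun _ => (1 : ENNReal)) ω ∂P := (lintegral_indicator_one hEmeas).symm
    _ ≤ ∫⁻ ω, ENNReal.ofReal ((insert ∅ (ℛ ω)).sup' (Finset.insert_nonempty _ _)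
        (fun R => ((R ∩ N P).card : ℝ) / ((max R.card 1 : ℕ) : ℝ))) ∂P :=
        lintegral_mono key
    _ ≤ ENNReal.ofReal α := hctrl P hP
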